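/- Let E be a separable real Banach space and let f : E → E be a continuous linear operator with operator norm at most 1. Then there exist a map φ : ℕ → ℕ, a continuous linear operator T : ℓ₁ → ℓ₁ satisfying T e_n = e_{φ(n)} for every n ∈ ℕ, and a surjective continuous linear operator q : ℓ₁ → E of norm at most 1 such that f ∘ q = q ∘ T. -/

import Mathlib

open TopologicalSpace

/-- `ℓ₁` : the real Banach space of summable sequences. -/
noncomputable abbrev ellOne : Type := lp (fun _ : ℕ => ℝ) 1

namespace LiftBasicAux

open scoped ENNReal

lemma summable_norm_coe (x : ellOne) : Summable fun n => ‖x n‖ := by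
  have := (lp.memℓp x).summable (by norm_num : (0:ℝ) < (1:ℝ≥0∞).toReal)
  simpa [ENNReal.toReal_one] using this

lemma hasSum_norm_coe (x : ellOne) : HasSum (fun n => ‖x n‖) ‖x‖ := by
  have := lp.hasSum_norm (by norm_num : (0:ℝ) < (1:ℝ≥0∞).toReal) x
  simpa [ENNReal.toReal_one] using this

lemma hasSum_apply_single {F : Type} [NormedAddCommGroup F] [NormedSpace ℝ F]
    (A : ellOne →L[ℝ] F) (x : ellOne) :
    HasSum (fun n => x n • A (lp.single 1 n (1:ℝ))) (A x) := by
  have h := lp.hasSum_single (E := fun _ : ℕ => ℝ) (p := 1) (by norm_num) x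
  have h2 := A.hasSum h
  refine h2.congr_fun fun n => ?_
  rw [← A.map_smul]
  congr 1
  have := lp.single_smul (𝕜 := ℝ) (E := fun _ : ℕ => ℝ) 1 n (x n) (1:ℝ)
  simpa using this.symm

set_option linter.unusedSectionVars false
set_option linter.unnecessarySimpa false

variable {F : Type} [NormedAddCommGroup F] [NormedSpace ℝ F] [CompleteSpace F]

lemma summable_norm_smul (d : ℕ → F) (hd : ∀ n, ‖d n‖ ≤ 1) (x : ellOne) :
    Summable fun n => ‖x n • d n‖ := by
  refine Summable.of_nonneg_of_le (fun n => norm_nonneg _) (fun n => ?_) (summable_norm_coe x)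
  rw [norm_smul]
  exact mul_le_of_le_one_right (norm_nonneg _) (hd n)

lemma summable_smul_of_bdd (d : ℕ → F) (hd : ∀ n, ‖d n‖ ≤ 1) (x : ellOne) :
    Summable fun n => x n • d n :=
  (summable_norm_smul d hd x).of_norm

/-- The canonical operator `ℓ₁ → F` sending `eₙ` to `d n`, for a bounded family `d`. -/
noncomputable def Q (d : ℕ → F) (hd : ∀ n, ‖d n‖ ≤ 1) : ellOne →L[ℝ] F :=
  LinearMap.mkContinuous
    { toFun := fun x => ∑' n, x n • d n
      map_add' := fun x y => by
        rw [← Summable.tsum_add (summable_smul_of_bdd d hd x) (summable_smul_of_bdd d hd y)]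
        refine tsum_congr fun n => ?_
        have hxy : ((x + y : ellOne) : ∀ _, ℝ) n = x n + y n := by
          rw [lp.coeFn_add]; rfl
        rw [hxy, add_smul]
      map_smul' := fun c x => by
        have hs := (summable_smul_of_bdd d hd x).hasSum
        have := (hs.const_smul c).tsum_eq
        simp only [RingHom.id_apply]
        rw [← this]
        refine tsum_congr fun n => ?_
        have hcx : ((c • x : ellOne) : ∀ _, ℝ) n = c * x n := by
          rw [lp.coeFn_smul]; rfl
        rw [hcx, mul_smul] }
    1 (fun x => by
      simp only [LinearMap.coe_mk, AddHom.coe_mk, one_mul]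
      calc ‖∑' n, x n • d n‖ ≤ ∑' n, ‖x n • d n‖ :=
            norm_tsum_le_tsum_norm (summable_norm_smul d hd x)
        _ ≤ ∑' n, ‖x n‖ := by
            refine Summable.tsum_le_tsum (fun n => ?_) (summable_norm_smul d hd x) (summable_norm_coe x)
            rw [norm_smul]
            exact mul_le_of_le_one_right (norm_nonneg _) (hd n)
        _ = ‖x‖ := (hasSum_norm_coe x).tsum_eq)

lemma Q_norm_le (d : ℕ → F) (hd : ∀ n, ‖d n‖ ≤ 1) : ‖Q d hd‖ ≤ 1 :=
  LinearMap.mkContinuous_norm_le _ zero_le_one _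

lemma Q_single (d : ℕ → F) (hd : ∀ n, ‖d n‖ ≤ 1) (n : ℕ) :
    Q d hd (lp.single 1 n (1:ℝ)) = d n := by
  show (∑' m, (lp.single 1 n (1:ℝ) : ellOne) m • d m) = d n
  rw [tsum_eq_single n (fun m hm => by
    rw [lp.single_apply_ne 1 n _ hm, zero_smul])]
  rw [lp.single_apply_self, one_smul]

lemma iterate_norm_le {E : Type} [NormedAddCommGroup E] [NormedSpace ℝ E]
    (f : E →L[ℝ] E) (hf : ‖f‖ ≤ 1) (k : ℕ) (z : E) : ‖(⇑f)^[k] z‖ ≤ ‖z‖ := by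
  induction k with
  | zero => simp
  | succ k ih =>
    rw [Function.iterate_succ_apply']
    calc ‖f ((⇑f)^[k] z)‖ ≤ ‖f‖ * ‖(⇑f)^[k] z‖ := f.le_opNorm _
      _ ≤ 1 * ‖z‖ := mul_le_mul hf ih (norm_nonneg _) zero_le_one
      _ = ‖z‖ := one_mul _

/-- Simple recursion helper. -/
def remSeq {E : Type} (g : E → E) (y : E) : ℕ → E
  | 0 => y
  | k + 1 => g (remSeq g y k)

end LiftBasicAux

open LiftBasicAux

/-- Every nonexpansive continuous linear operator on a separable real Banach space lifts,
via a surjective nonexpansive operator `q : ℓ₁ → E`, to a *basic* operator `T` on `ℓ₁`,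
i.e. one satisfying `T eₙ = e_{φ n}` for some `φ : ℕ → ℕ`, where `eₙ = lp.single 1 n 1`. -/
theorem lifts_to_basic_operator (E : Type) [NormedAddCommGroup E] [NormedSpace ℝ E]
    [CompleteSpace E] [SeparableSpace E] (f : E →L[ℝ] E) (hf : ‖f‖ ≤ 1) :
    ∃ (φ : ℕ → ℕ) (T : ellOne →L[ℝ] ellOne) (q : ellOne →L[ℝ] E),
      (∀ n : ℕ, T (lp.single 1 n (1 : ℝ)) = lp.single 1 (φ n) (1 : ℝ)) ∧
      Function.Surjective q ∧ ‖q‖ ≤ 1 ∧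
      ∀ x : ellOne, f (q x) = q (T x) := by
  classical
  have : Nonempty E := ⟨0⟩
  obtain ⟨u, hu⟩ : ∃ u : ℕ → E, DenseRange u := ⟨denseSeq E, denseRange_denseSeq E⟩
  -- a sequence in the closed unit ball whose 1/2-neighbourhoods cover the ball
  set e : ℕ → E := fun n => if ‖u n‖ ≤ 1 then u n else ‖u n‖⁻¹ • u n with he_def
  have he_norm : ∀ n, ‖e n‖ ≤ 1 := by
    intro n
    by_cases h : ‖u n‖ ≤ 1
    · simpa [he_def, h] using h
    · push_neg at h
      have h0 : ‖u n‖ ≠ 0 := by positivity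
      simp only [he_def, if_neg (not_le.mpr h)]
      rw [norm_smul, norm_inv, norm_norm, inv_mul_cancel₀ h0]
  have he_close : ∀ z : E, ‖z‖ ≤ 1 → ∃ n, ‖z - e n‖ ≤ 1/2 := by
    intro z hz
    obtain ⟨n, hn⟩ := Metric.denseRange_iff.mp hu z (1/4) (by norm_num)
    rw [dist_eq_norm] at hn
    refine ⟨n, ?_⟩
    by_cases h : ‖u n‖ ≤ 1
    · simp only [he_def, if_pos h]; linarith
    · push_neg at h
      have h0 : ‖u n‖ ≠ 0 := by positivity
      simp only [he_def, if_neg (not_le.mpr h)]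
      have key : ‖u n - ‖u n‖⁻¹ • u n‖ = ‖u n‖ - 1 := by
        have h1 : u n - ‖u n‖⁻¹ • u n = (1 - ‖u n‖⁻¹) • u n := by
          rw [sub_smul, one_smul]
        rw [h1, norm_smul, Real.norm_eq_abs, abs_of_nonneg, sub_mul, one_mul,
          inv_mul_cancel₀ h0]
        have : ‖u n‖⁻¹ ≤ 1 := by
          rw [inv_le_one_iff₀]; right; linarith
        linarith
      have h2 : ‖u n‖ - 1 ≤ ‖z - u n‖ := by
        have := norm_sub_norm_le (u n) z
        rw [norm_sub_rev (u n) z] at this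
        linarith
      calc ‖z - ‖u n‖⁻¹ • u n‖ ≤ ‖z - u n‖ + ‖u n - ‖u n‖⁻¹ • u n‖ :=
            norm_sub_le_norm_sub_add_norm_sub _ _ _
        _ ≤ 1/2 := by rw [key]; linarith
  -- the sequence `d` and the shift `φ`
  set d : ℕ → E := fun m => (⇑f)^[m.unpair.2] (e m.unpair.1) with hd_def
  set φ : ℕ → ℕ := fun m => Nat.pair m.unpair.1 (m.unpair.2 + 1) with hφ_def
  have hd_norm : ∀ m, ‖d m‖ ≤ 1 := fun m =>
    le_trans (iterate_norm_le f hf _ _) (he_norm _)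
  have hd_step : ∀ m, f (d m) = d (φ m) := by
    intro m
    simp only [hd_def, hφ_def, Nat.unpair_pair]
    rw [Function.iterate_succ_apply']
  have hd_close : ∀ z : E, ‖z‖ ≤ 1 → ∃ m, ‖z - d m‖ ≤ 1/2 := by
    intro z hz
    obtain ⟨n, hn⟩ := he_close z hz
    exact ⟨Nat.pair n 0, by simpa [hd_def, Nat.unpair_pair] using hn⟩
  -- the operators
  have hsingle_norm : ∀ m : ℕ, ‖(lp.single 1 m (1:ℝ) : ellOne)‖ ≤ 1 := by
    intro m
    have := lp.norm_single (E := fun _ : ℕ => ℝ) (p := 1) (by norm_num) m (1:ℝ)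
    simp only [norm_one] at this
    rw [this]
  have hT_norm : ∀ n : ℕ, ‖(lp.single 1 (φ n) (1:ℝ) : ellOne)‖ ≤ 1 := fun n =>
    hsingle_norm (φ n)
  set q : ellOne →L[ℝ] E := Q d hd_norm with hq_def
  set T : ellOne →L[ℝ] ellOne := Q (fun n => lp.single 1 (φ n) (1:ℝ)) hT_norm with hT_def
  have hq_single : ∀ n, q (lp.single 1 n (1:ℝ)) = d n := fun n => Q_single d hd_norm n
  have hT_single : ∀ n, T (lp.single 1 n (1:ℝ)) = lp.single 1 (φ n) (1:ℝ) := fun n =>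
    Q_single _ hT_norm n
  -- surjectivity onto the unit ball
  have hball : ∀ y : E, ‖y‖ ≤ 1 → ∃ x : ellOne, q x = y := by
    intro y hy
    have pick : ∀ z : E, ∃ m : ℕ, ‖z‖ ≤ 1 → ‖z - d m‖ ≤ 1/2 := by
      intro z
      by_cases h : ‖z‖ ≤ 1
      · obtain ⟨m, hm⟩ := hd_close z h; exact ⟨m, fun _ => hm⟩
      · exact ⟨0, fun h' => absurd h' h⟩
    choose pk hpk using pick
    set rem : ℕ → E := remSeq (fun z => (2:ℝ) • (z - d (pk z))) y with hrem_def
    have rem_zero : rem 0 = y := rfl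
    have rem_succ : ∀ k, rem (k+1) = (2:ℝ) • (rem k - d (pk (rem k))) := fun k => rfl
    have hrem_norm : ∀ k, ‖rem k‖ ≤ 1 := by
      intro k
      induction k with
      | zero => exact hy
      | succ k ih =>
        rw [rem_succ, norm_smul, Real.norm_ofNat]
        have := hpk (rem k) ih
        linarith
    set idx : ℕ → ℕ := fun k => pk (rem k) with hidx_def
    have hps : ∀ K, ∑ k ∈ Finset.range K, ((1:ℝ)/2)^k • d (idx k)
        = y - ((1:ℝ)/2)^K • rem K := by
      intro K
      induction K with
      | zero => rw [Finset.range_zero, Finset.sum_empty, pow_zero, one_smul, rem_zero, sub_self]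
      | succ K ih =>
        rw [Finset.sum_range_succ, ih, rem_succ, smul_smul]
        have h2 : ((1:ℝ)/2)^(K+1) * 2 = (1/2)^K := by ring
        rw [h2, smul_sub]
        abel
    have hxsum : Summable (fun k => ((1:ℝ)/2)^k • (lp.single 1 (idx k) (1:ℝ) : ellOne)) := by
      refine Summable.of_norm ?_
      refine Summable.of_nonneg_of_le (fun k => norm_nonneg _) (fun k => ?_)
        (summable_geometric_of_lt_one (by norm_num) (by norm_num : (1:ℝ)/2 < 1))
      rw [norm_smul]
      calc ‖((1:ℝ)/2)^k‖ * ‖(lp.single 1 (idx k) (1:ℝ) : ellOne)‖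
          ≤ ‖((1:ℝ)/2)^k‖ * 1 :=
            mul_le_mul_of_nonneg_left (hsingle_norm (idx k)) (norm_nonneg _)
        _ = ((1:ℝ)/2)^k := by
            rw [mul_one, Real.norm_eq_abs, abs_of_nonneg (by positivity)]
    refine ⟨∑' k, ((1:ℝ)/2)^k • (lp.single 1 (idx k) (1:ℝ) : ellOne), ?_⟩
    have hx := hxsum.hasSum
    have hqx : HasSum (fun k => ((1:ℝ)/2)^k • d (idx k))
        (q (∑' k, ((1:ℝ)/2)^k • (lp.single 1 (idx k) (1:ℝ) : ellOne))) := by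
      have h := q.hasSum hx
      refine h.congr_fun fun k => ?_
      rw [map_smul, hq_single]
    have hsummable : Summable (fun k => ((1:ℝ)/2)^k • d (idx k)) := by
      refine Summable.of_norm ?_
      refine Summable.of_nonneg_of_le (fun k => norm_nonneg _) (fun k => ?_)
        (summable_geometric_of_lt_one (by norm_num) (by norm_num : (1:ℝ)/2 < 1))
      rw [norm_smul]
      calc ‖((1:ℝ)/2)^k‖ * ‖d (idx k)‖
          ≤ ‖((1:ℝ)/2)^k‖ * 1 :=
            mul_le_mul_of_nonneg_left (hd_norm (idx k)) (norm_nonneg _)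
        _ = ((1:ℝ)/2)^k := by
            rw [mul_one, Real.norm_eq_abs, abs_of_nonneg (by positivity)]
    have hy' : HasSum (fun k => ((1:ℝ)/2)^k • d (idx k)) y := by
      have ht := hsummable.hasSum.tendsto_sum_nat
      have ht2 : Filter.Tendsto (fun K => ∑ k ∈ Finset.range K, ((1:ℝ)/2)^k • d (idx k))
          Filter.atTop (nhds y) := by
        simp only [hps]
        have hz : Filter.Tendsto (fun K => ((1:ℝ)/2)^K • rem K) Filter.atTop (nhds 0) := by
          refine squeeze_zero_norm (fun K => ?_)
            (tendsto_pow_atTop_nhds_zero_of_lt_one (by norm_num) (by norm_num : (1:ℝ)/2 < 1))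
          rw [norm_smul]
          calc ‖((1:ℝ)/2)^K‖ * ‖rem K‖
              ≤ ‖((1:ℝ)/2)^K‖ * 1 := mul_le_mul_of_nonneg_left (hrem_norm K) (norm_nonneg _)
            _ = ((1:ℝ)/2)^K := by
                rw [mul_one, Real.norm_eq_abs, abs_of_nonneg (by positivity)]
        simpa using Filter.Tendsto.sub (tendsto_const_nhds (x := y)) hz
      have heq := tendsto_nhds_unique ht ht2
      rw [← heq]
      exact hsummable.hasSum
    exact hqx.unique hy'
  have hsurj : Function.Surjective q := by
    intro y
    rcases eq_or_ne y 0 with rfl | hy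
    · exact ⟨0, map_zero q⟩
    · have hny : ‖y‖ ≠ 0 := norm_ne_zero_iff.mpr hy
      obtain ⟨x, hx⟩ := hball (‖y‖⁻¹ • y)
        (by rw [norm_smul, norm_inv, norm_norm, inv_mul_cancel₀ hny])
      exact ⟨‖y‖ • x, by rw [map_smul, hx, smul_smul, mul_inv_cancel₀ hny, one_smul]⟩
  refine ⟨φ, T, q, hT_single, hsurj, Q_norm_le d hd_norm, ?_⟩
  intro x
  have h1 := hasSum_apply_single (f.comp q) x
  have h2 := hasSum_apply_single (q.comp T) x
  simp only [ContinuousLinearMap.comp_apply, hq_single, hT_single, hd_step] at h1 h2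
  exact h1.unique h2
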